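/- For any finite graph Γ and any subset S ⊆ E(Γ), the complexity of the graph Γ̂_S obtained by subdividing each edge of S once satisfies c(Γ̂_S) = Σ_{S' ⊆ S} c(Γ∖S'), where the sum is over all subsets S' of S and c denotes the number of spanning trees. -/

import Mathlib

open Finset

variable {V E : Type}

/-- Number of edges in `F` joining a vertex of `A` with a vertex of `B`. -/
def valS [DecidableEq V] [DecidableEq E] (ends : E → V × V) (F : Finset E)
    (A B : Finset V) : ℕ :=
  (F.filter (fun e => ((ends e).1 ∈ A ∧ (ends e).2 ∈ B) ∨
    ((ends e).1 ∈ B ∧ (ends e).2 ∈ A))).card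

/-- Number of edges of the graph joining `A` and `B`. -/
def valAB [Fintype E] [DecidableEq V] [DecidableEq E] (ends : E → V × V)
    (A B : Finset V) : ℕ :=
  valS ends Finset.univ A B

/-- Number of edges of `F` with both endpoints in `W` (loops included). -/
def insideE [DecidableEq V] [DecidableEq E] (ends : E → V × V) (W : Finset V)
    (F : Finset E) : ℕ :=
  (F.filter (fun e => (ends e).1 ∈ W ∧ (ends e).2 ∈ W)).card

/-- The Laplacian of the graph with vertex set `V` and edge set `F`. -/
def lapF [Fintype V] [Fintype E] [DecidableEq V] [DecidableEq E] (ends : E → V × V)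
    (F : Finset E) (d : V → ℤ) (v : V) : ℤ :=
  -d v * (valS ends F {v} {v}ᶜ : ℤ) +
    ∑ w ∈ Finset.univ.erase v, d w * (valS ends F {v} {w} : ℤ)

/-- Characteristic 0-cochain of a set of vertices. -/
def chi [DecidableEq V] (A : Finset V) (v : V) : ℤ := if v ∈ A then 1 else 0

/-- Reachability using edges belonging to `F`. -/
def Reaches (ends : E → V × V) (F : Finset E) (u v : V) : Prop :=
  Relation.ReflTransGen (fun a b => ∃ e ∈ F, ends e = (a, b) ∨ ends e = (b, a)) u v

/-- Connectedness of the graph with vertex set `V` and edge set `F`. -/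
def ConnF (ends : E → V × V) (F : Finset E) : Prop :=
  ∀ u v : V, Reaches ends F u v

/-- Complexity: the number of spanning trees using edges from `F`
(a spanning tree is a connected spanning subgraph with `|V| - 1` edges). -/
noncomputable def complexity [Fintype V] (ends : E → V × V) (F : Finset E) : ℕ :=
  {T : Finset E | T ⊆ F ∧ ConnF ends T ∧ T.card = Fintype.card V - 1}.ncard

/-- The quantity η(d, W) = -d_W - |S ∩ E(Γ[W])| + q_W - val(W)/2. -/
def eta [Fintype V] [Fintype E] [DecidableEq V] [DecidableEq E]
    (ends : E → V × V) (S : Finset E) (q : V → ℚ) (d : V → ℤ) (W : Finset V) : ℚ :=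
  -(∑ w ∈ W, (d w : ℚ)) - (insideE ends W S : ℚ) + (∑ w ∈ W, q w)
    - (valAB ends W Wᶜ : ℚ) / 2

/-- The quantity ε(d, W) = d_W + |S ∩ E(Γ[W])| - q_W - val(W)/2 + val_S(W). -/
def eps [Fintype V] [Fintype E] [DecidableEq V] [DecidableEq E]
    (ends : E → V × V) (S : Finset E) (q : V → ℚ) (d : V → ℤ) (W : Finset V) : ℚ :=
  (∑ w ∈ W, (d w : ℚ)) + (insideE ends W S : ℚ) - (∑ w ∈ W, q w)
    - (valAB ends W Wᶜ : ℚ) / 2 + (valS ends S W Wᶜ : ℚ)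

/-- A 0-cochain `d` is semistable on Γ∖S with respect to `q`. -/
def Semistable [Fintype V] [Fintype E] [DecidableEq V] [DecidableEq E]
    (ends : E → V × V) (S : Finset E) (q : V → ℚ) (d : V → ℤ) : Prop :=
  ((∑ v, d v : ℤ) : ℚ) = (∑ v, q v) - S.card ∧
  ∀ W : Finset V, W ≠ Finset.univ →
    (∑ w ∈ W, (d w : ℚ)) + (insideE ends W S : ℚ) ≥
      (∑ w ∈ W, q w) - (valAB ends W Wᶜ : ℚ) / 2

/-- A 0-cochain `d` is `v₀`-quasistable on Γ∖S with respect to `q`. -/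
def Quasistable [Fintype V] [Fintype E] [DecidableEq V] [DecidableEq E]
    (ends : E → V × V) (S : Finset E) (q : V → ℚ) (v₀ : V) (d : V → ℤ) : Prop :=
  Semistable ends S q d ∧
  ∀ W : Finset V, W ≠ Finset.univ → v₀ ∈ W →
    (∑ w ∈ W, (d w : ℚ)) + (insideE ends W S : ℚ) >
      (∑ w ∈ W, q w) - (valAB ends W Wᶜ : ℚ) / 2

/-- Connectedness of the subgraph induced on `A`. -/
def ConnOn (ends : E → V × V) (A : Finset V) : Prop :=
  ∀ u ∈ A, ∀ v ∈ A,
    Relation.ReflTransGen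
      (fun a b => a ∈ A ∧ b ∈ A ∧ ∃ e : E, ends e = (a, b) ∨ ends e = (b, a)) u v

/-- `C` is a connected component of the subgraph induced on `A`. -/
def IsCompOf [DecidableEq V] (ends : E → V × V) (C A : Finset V) : Prop :=
  C.Nonempty ∧ C ⊆ A ∧ ConnOn ends C ∧
  ∀ e : E, ¬ (((ends e).1 ∈ C ∧ (ends e).2 ∈ A \ C) ∨
    ((ends e).1 ∈ A \ C ∧ (ends e).2 ∈ C))

/-- An edge is a bridge (separating node) if removing it disconnects the graph. -/
def Bridge [Fintype E] [DecidableEq E] (ends : E → V × V) (e : E) : Prop :=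
  ¬ ConnF ends (Finset.univ.erase e)

/-- `e` is a boundary edge of `W`: it joins `W` with its complement. -/
def Boundary (ends : E → V × V) (W : Finset V) (e : E) : Prop :=
  ((ends e).1 ∈ W ∧ (ends e).2 ∉ W) ∨ ((ends e).1 ∉ W ∧ (ends e).2 ∈ W)

/-- `W` is a spine: all of its boundary edges are bridges (separating nodes). -/
def Spine [Fintype E] [DecidableEq E] (ends : E → V × V) (W : Finset V) : Prop :=
  ∀ e : E, Boundary ends W e → Bridge ends e

/-- The polarization `q` is integral at the subcurve `W`: for every connected
component `C` of `W` and of `Wᶜ`, the number q_C - δ_C/2 is an integer. -/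
def IntegralAt [Fintype V] [Fintype E] [DecidableEq V] [DecidableEq E]
    (ends : E → V × V) (q : V → ℚ) (W : Finset V) : Prop :=
  ∀ C : Finset V, (IsCompOf ends C W ∨ IsCompOf ends C Wᶜ) →
    ∃ n : ℤ, (∑ w ∈ C, q w) - (valAB ends C Cᶜ : ℚ) / 2 = (n : ℚ)

/-- The polarization `q` is general: not integral at any proper subcurve. -/
def GeneralPol [Fintype V] [Fintype E] [DecidableEq V] [DecidableEq E]
    (ends : E → V × V) (q : V → ℚ) : Prop :=
  ∀ W : Finset V, W.Nonempty → W ≠ Finset.univ → ¬ IntegralAt ends q W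

/-- The polarization `q` is non-degenerate: not integral at any proper subcurve
which is not a spine. -/
def NonDegPol [Fintype V] [Fintype E] [DecidableEq V] [DecidableEq E]
    (ends : E → V × V) (q : V → ℚ) : Prop :=
  ∀ W : Finset V, W.Nonempty → W ≠ Finset.univ → ¬ Spine ends W →
    ¬ IntegralAt ends q W

/-- A line bundle of multidegree `d` is `q`-semistable. -/
def SemistableLB [Fintype V] [Fintype E] [DecidableEq V] [DecidableEq E]
    (ends : E → V × V) (q : V → ℚ) (d : V → ℤ) : Prop :=
  ((∑ v, d v : ℤ) : ℚ) = (∑ v, q v) ∧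
  ∀ W : Finset V, W ≠ Finset.univ →
    ((∑ w ∈ W, d w : ℤ) : ℚ) ≥ (∑ w ∈ W, q w) - (valAB ends W Wᶜ : ℚ) / 2


/-- The graph obtained from Γ by subdividing once each edge belonging to `S`:
its vertices, edges and endpoint map. -/
def subEnds [DecidableEq E] (ends : E → V × V) (S : Finset E) :
    ({e : E // e ∉ S} ⊕ ({e : E // e ∈ S} × Bool)) →
      (V ⊕ {e : E // e ∈ S}) × (V ⊕ {e : E // e ∈ S})
  | Sum.inl e => (Sum.inl (ends e.1).1, Sum.inl (ends e.1).2)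
  | Sum.inr (e, false) => (Sum.inl (ends e.1).1, Sum.inr e)
  | Sum.inr (e, true) => (Sum.inr e, Sum.inl (ends e.1).2)


section Stmt13Aux

set_option linter.unusedSectionVars false

open Classical in
lemma complexity_eq_card [Fintype V] [Fintype E] (ends : E → V × V) (F : Finset E) :
    complexity ends F = (Finset.univ.filter fun T : Finset E =>
      T ⊆ F ∧ ConnF ends T ∧ T.card = Fintype.card V - 1).card := by
  rw [complexity, Set.ncard_eq_toFinset_card', Set.toFinset_setOf]

variable [Fintype V] [Fintype E] [DecidableEq V] [DecidableEq E]

lemma reaches_symm (ends : E → V × V) (F : Finset E) : Symmetric (Reaches ends F) :=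
  fun a b h => (@Relation.ReflTransGen.stdSymm _ _
    ⟨fun _ _ ⟨e, he, h⟩ => ⟨e, he, h.symm⟩⟩).symm a b h

lemma reaches_single {ends : E → V × V} {F : Finset E} {a b : V} (e : E) (he : e ∈ F)
    (h : ends e = (a, b) ∨ ends e = (b, a)) : Reaches ends F a b :=
  Relation.ReflTransGen.single ⟨e, he, h⟩

instance psiTDec (S S' T : Finset E) :
    DecidablePred (fun x : {e : E // e ∉ S} ⊕ ({e : E // e ∈ S} × Bool) =>
      Sum.elim (fun e : {e : E // e ∉ S} => e.1 ∈ T)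
        (fun p : {e : E // e ∈ S} × Bool =>
          p.1.1 ∈ T ∨ (if p.2 then p.1.1 ∈ S' else p.1.1 ∉ S')) x) := fun x =>
  match x with
  | Sum.inl e => inferInstanceAs (Decidable (e.1 ∈ T))
  | Sum.inr p =>
      inferInstanceAs (Decidable (p.1.1 ∈ T ∨ (if p.2 then p.1.1 ∈ S' else p.1.1 ∉ S')))

/-- The tree of the subdivided graph associated with `(S', T)`. -/
def psiT (S S' T : Finset E) :
    Finset ({e : E // e ∉ S} ⊕ ({e : E // e ∈ S} × Bool)) :=
  Finset.univ.filter fun x => Sum.elim (fun e : {e : E // e ∉ S} => e.1 ∈ T)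
    (fun p : {e : E // e ∈ S} × Bool =>
      p.1.1 ∈ T ∨ (if p.2 then p.1.1 ∈ S' else p.1.1 ∉ S')) x

@[simp] lemma mem_psiT_inl {S S' T : Finset E} (e : {e : E // e ∉ S}) :
    Sum.inl e ∈ psiT S S' T ↔ e.1 ∈ T := by simp [psiT]

@[simp] lemma mem_psiT_true {S S' T : Finset E} (e : {e : E // e ∈ S}) :
    Sum.inr (e, true) ∈ psiT S S' T ↔ e.1 ∈ T ∨ e.1 ∈ S' := by simp [psiT]

@[simp] lemma mem_psiT_false {S S' T : Finset E} (e : {e : E // e ∈ S}) :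
    Sum.inr (e, false) ∈ psiT S S' T ↔ e.1 ∈ T ∨ e.1 ∉ S' := by simp [psiT]

/-- The set of deleted edges extracted from a tree of the subdivided graph. -/
def phiS (S : Finset E)
    (That : Finset ({e : E // e ∉ S} ⊕ ({e : E // e ∈ S} × Bool))) : Finset E :=
  (S.attach.filter fun e => Sum.inr (e, true) ∈ That ∧ Sum.inr (e, false) ∉ That).image
    Subtype.val

/-- The tree of the original graph extracted from a tree of the subdivided graph. -/
def phiT (S : Finset E)
    (That : Finset ({e : E // e ∉ S} ⊕ ({e : E // e ∈ S} × Bool))) : Finset E :=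
  Finset.univ.filter fun e =>
    if h : e ∈ S then Sum.inr (⟨e, h⟩, true) ∈ That ∧ Sum.inr (⟨e, h⟩, false) ∈ That
    else Sum.inl ⟨e, h⟩ ∈ That

lemma mem_phiS {S : Finset E} {That} (e : {e : E // e ∈ S}) :
    e.1 ∈ phiS S That ↔ (Sum.inr (e, true) ∈ That ∧ Sum.inr (e, false) ∉ That) := by
  constructor
  · rintro h
    simp only [phiS, Finset.mem_image, Finset.mem_filter, Finset.mem_attach, true_and] at h
    obtain ⟨a, ha, h⟩ := h
    obtain rfl : a = e := Subtype.ext h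
    exact ha
  · intro h
    simp only [phiS, Finset.mem_image, Finset.mem_filter, Finset.mem_attach, true_and]
    exact ⟨e, h, rfl⟩

lemma phiS_subset {S : Finset E} {That} : phiS S That ⊆ S := by
  intro e he
  simp only [phiS, Finset.mem_image, Finset.mem_filter] at he
  obtain ⟨a, _, rfl⟩ := he
  exact a.2

lemma mem_phiT_of_mem {S : Finset E} {That} (e : {e : E // e ∈ S}) :
    e.1 ∈ phiT S That ↔
      (Sum.inr (e, true) ∈ That ∧ Sum.inr (e, false) ∈ That) := by
  simp [phiT, dif_pos e.2]

lemma mem_phiT_of_not_mem {S : Finset E} {That} (e : {e : E // e ∉ S}) :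
    e.1 ∈ phiT S That ↔ Sum.inl e ∈ That := by
  simp [phiT, dif_neg e.2]

/-- Every midpoint of an edge of `S` must be covered by one of its two halves. -/
lemma exists_half {ends : E → V × V} {S : Finset E} {That}
    (hconn : ConnF (subEnds ends S) That) (e : {e : E // e ∈ S}) :
    Sum.inr (e, true) ∈ That ∨ Sum.inr (e, false) ∈ That := by
  have h := hconn (Sum.inr e) (Sum.inl (ends e.1).1)
  rcases Relation.ReflTransGen.cases_head h with h | ⟨c, ⟨ee, hee, hor⟩, -⟩
  · exact absurd h (by simp)
  · rcases ee with f | ⟨f, b⟩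
    · exfalso; rcases hor with h | h <;> simp [subEnds, Prod.ext_iff] at h
    · cases b
      · rcases hor with h | h
        · exfalso; simp [subEnds, Prod.ext_iff] at h
        · refine Or.inr ?_
          have hfe : f = e := by
            have h2 := congrArg Prod.snd h
            simpa [subEnds] using h2
          rwa [hfe] at hee
      · rcases hor with h | h
        · refine Or.inl ?_
          have hfe : f = e := by
            have h2 := congrArg Prod.fst h
            simpa [subEnds] using h2
          rwa [hfe] at hee
        · exfalso; simp [subEnds, Prod.ext_iff] at h

lemma edge_reach {ends : E → V × V} {S S' T : Finset E} {e : E} (he : e ∈ T) :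
    Reaches (subEnds ends S) (psiT S S' T)
      (Sum.inl (ends e).1) (Sum.inl (ends e).2) := by
  by_cases h : e ∈ S
  · refine Relation.ReflTransGen.trans
      (b := Sum.inr (⟨e, h⟩ : {e : E // e ∈ S})) ?_ ?_
    · exact reaches_single (Sum.inr (⟨e, h⟩, false)) (by simp [he]) (Or.inl rfl)
    · exact reaches_single (Sum.inr (⟨e, h⟩, true)) (by simp [he]) (Or.inl rfl)
  · exact reaches_single (Sum.inl ⟨e, h⟩) (by simp [he]) (Or.inl rfl)

lemma mid_reach {ends : E → V × V} (S S' T : Finset E) (e : {e : E // e ∈ S}) :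
    ∃ v : V, Reaches (subEnds ends S) (psiT S S' T) (Sum.inr e) (Sum.inl v) := by
  by_cases h : e.1 ∈ S'
  · exact ⟨(ends e.1).2, reaches_single (Sum.inr (e, true)) (by simp [h]) (Or.inl rfl)⟩
  · exact ⟨(ends e.1).1, reaches_single (Sum.inr (e, false)) (by simp [h]) (Or.inr rfl)⟩

lemma connF_psiT {ends : E → V × V} {S S' T : Finset E} (hT : ConnF ends T) :
    ConnF (subEnds ends S) (psiT S S' T) := by
  have key : ∀ a b : V, Reaches ends T a b →
      Reaches (subEnds ends S) (psiT S S' T) (Sum.inl a) (Sum.inl b) := by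
    intro a b h
    induction h with
    | refl => exact .refl
    | tail _ hbc ih =>
      refine ih.trans ?_
      obtain ⟨e, he, hor⟩ := hbc
      have h2 := edge_reach (ends := ends) (S := S) (S' := S') he
      rcases hor with h | h <;> rw [h] at h2
      · exact h2
      · exact reaches_symm _ _ h2
  have toV : ∀ x, ∃ v : V, Reaches (subEnds ends S) (psiT S S' T) x (Sum.inl v) := by
    rintro (v | e)
    · exact ⟨v, .refl⟩
    · exact mid_reach S S' T e
  intro x y
  obtain ⟨u, hu⟩ := toV x
  obtain ⟨v, hv⟩ := toV y
  exact (hu.trans (key u v (hT u v))).trans (reaches_symm _ _ hv)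

/-- Projection of the subdivided graph to the original vertices. -/
def projV (ends : E → V × V) (S : Finset E)
    (That : Finset ({e : E // e ∉ S} ⊕ ({e : E // e ∈ S} × Bool))) :
    V ⊕ {e : E // e ∈ S} → V
  | Sum.inl v => v
  | Sum.inr e => if Sum.inr (e, false) ∈ That then (ends e.1).1 else (ends e.1).2

lemma connF_phiT {ends : E → V × V} {S : Finset E} {That}
    (hconn : ConnF (subEnds ends S) That) : ConnF ends (phiT S That) := by
  have step : ∀ x y, (∃ ee ∈ That, subEnds ends S ee = (x, y) ∨ subEnds ends S ee = (y, x)) →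
      Reaches ends (phiT S That) (projV ends S That x) (projV ends S That y) := by
    rintro x y ⟨ee, hee, hor⟩
    rcases ee with f | ⟨f, b⟩
    · have hmem : f.1 ∈ phiT S That := (mem_phiT_of_not_mem f).2 hee
      rcases hor with h | h <;> simp only [subEnds, Prod.ext_iff] at h <;>
        obtain ⟨rfl, rfl⟩ := h
      · exact reaches_single f.1 hmem (Or.inl rfl)
      · exact reaches_single f.1 hmem (Or.inr rfl)
    · cases b
      · rcases hor with h | h <;> simp only [subEnds, Prod.ext_iff] at h <;>
          obtain ⟨rfl, rfl⟩ := h <;> simp only [projV] <;> rw [if_pos hee] <;>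
          exact Relation.ReflTransGen.refl
      · by_cases h2 : Sum.inr (f, false) ∈ That
        · have hmem : f.1 ∈ phiT S That := (mem_phiT_of_mem f).2 ⟨hee, h2⟩
          rcases hor with h | h <;> simp only [subEnds, Prod.ext_iff] at h <;>
            obtain ⟨rfl, rfl⟩ := h <;> simp only [projV] <;> rw [if_pos h2]
          · exact reaches_single f.1 hmem (Or.inl rfl)
          · exact reaches_single f.1 hmem (Or.inr rfl)
        · rcases hor with h | h <;> simp only [subEnds, Prod.ext_iff] at h <;>
            obtain ⟨rfl, rfl⟩ := h <;> simp only [projV] <;> rw [if_neg h2] <;>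
            exact Relation.ReflTransGen.refl
  have key : ∀ x y, Reaches (subEnds ends S) That x y →
      Reaches ends (phiT S That) (projV ends S That x) (projV ends S That y) := by
    intro x y h
    induction h with
    | refl => exact .refl
    | tail _ hbc ih => exact ih.trans (step _ _ hbc)
  intro u v
  exact key (Sum.inl u) (Sum.inl v) (hconn (Sum.inl u) (Sum.inl v))

lemma card_psiT {S S' T : Finset E} (hS' : S' ⊆ S) (hdisj : ∀ e ∈ T, e ∉ S') :
    (psiT S S' T).card = T.card + S.card := by
  rw [psiT, Finset.card_filter, Fintype.sum_sum_type]
  simp only [Sum.elim_inl, Sum.elim_inr]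
  have h1 : (∑ a : {e : E // e ∉ S}, if (a.1 ∈ T) then (1 : ℕ) else 0)
      = ∑ e ∈ Sᶜ, if e ∈ T then 1 else 0 :=
    (Finset.sum_subtype Sᶜ (fun x => Finset.mem_compl) fun e => if e ∈ T then 1 else 0).symm
  have h2 : (∑ p : {e : E // e ∈ S} × Bool,
        if (p.1.1 ∈ T ∨ if p.2 then p.1.1 ∈ S' else p.1.1 ∉ S') then (1 : ℕ) else 0)
      = ∑ e ∈ S, (1 + if e ∈ T then 1 else 0) := by
    rw [Fintype.sum_prod_type]
    rw [← Finset.sum_subtype S (fun x => Iff.rfl)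
      (fun e => ∑ y : Bool, if (e ∈ T ∨ if y then e ∈ S' else e ∉ S') then (1 : ℕ) else 0)]
    refine Finset.sum_congr rfl fun e he => ?_
    rw [Fintype.sum_bool]
    by_cases ht : e ∈ T
    · simp [ht]
    · have hs := fun h => hdisj e h
      by_cases hs : e ∈ S' <;> simp [ht, hs]
  erw [h1, h2]
  rw [Finset.sum_add_distrib, Finset.sum_const, smul_eq_mul, mul_one]
  have h3 : ((∑ e ∈ S, if e ∈ T then (1 : ℕ) else 0) +
      ∑ e ∈ Sᶜ, if e ∈ T then (1 : ℕ) else 0) = T.card := by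
    rw [Finset.sum_add_sum_compl, ← Finset.card_filter]
    congr 1
    ext e
    simp
  omega

lemma phiS_psiT {S S' T : Finset E} (hS' : S' ⊆ S) (hdisj : ∀ e ∈ T, e ∉ S') :
    phiS S (psiT S S' T) = S' := by
  ext e
  constructor
  · intro h
    have he : e ∈ S := phiS_subset h
    have := (mem_phiS (⟨e, he⟩ : {e : E // e ∈ S})).1 h
    simp only [mem_psiT_true, mem_psiT_false] at this
    by_cases ht : e ∈ T
    · exact absurd (Or.inl ht) this.2
    · by_cases hs : e ∈ S'
      · exact hs
      · exact absurd (Or.inr hs) this.2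
  · intro h
    have he : e ∈ S := hS' h
    refine (mem_phiS (⟨e, he⟩ : {e : E // e ∈ S})).2 ?_
    have ht : e ∉ T := fun ht => hdisj e ht h
    simp only [mem_psiT_true, mem_psiT_false]
    exact ⟨Or.inr h, by tauto⟩

lemma phiT_psiT {S S' T : Finset E} (hdisj : ∀ e ∈ T, e ∉ S') :
    phiT S (psiT S S' T) = T := by
  ext e
  by_cases h : e ∈ S
  · rw [show e = (⟨e, h⟩ : {e : E // e ∈ S}).1 from rfl, mem_phiT_of_mem]
    simp only [mem_psiT_true, mem_psiT_false]
    constructor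
    · rintro ⟨h1 | h1, h2 | h2⟩ <;> tauto
    · intro ht; exact ⟨Or.inl ht, Or.inl ht⟩
  · rw [show e = (⟨e, h⟩ : {e : E // e ∉ S}).1 from rfl, mem_phiT_of_not_mem]
    simp

lemma psiT_phi {S : Finset E} {That : Finset ({e : E // e ∉ S} ⊕ ({e : E // e ∈ S} × Bool))}
    (hhalf : ∀ e : {e : E // e ∈ S},
      Sum.inr (e, true) ∈ That ∨ Sum.inr (e, false) ∈ That) :
    psiT S (phiS S That) (phiT S That) = That := by
  ext x
  rcases x with e | ⟨e, b⟩
  · rw [mem_psiT_inl, mem_phiT_of_not_mem]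
  · cases b
    · rw [mem_psiT_false, mem_phiT_of_mem e, mem_phiS e]
      have := hhalf e
      tauto
    · rw [mem_psiT_true, mem_phiT_of_mem e, mem_phiS e]
      have := hhalf e
      tauto

lemma phiT_disj {S : Finset E} {That} : ∀ e ∈ phiT S That, e ∉ phiS S That := by
  intro e he hs
  have hS : e ∈ S := phiS_subset hs
  have h1 := (mem_phiS (⟨e, hS⟩ : {e : E // e ∈ S})).1 hs
  have h2 := (mem_phiT_of_mem (⟨e, hS⟩ : {e : E // e ∈ S})).1 he
  exact h1.2 h2.2

lemma card_V_pos_or (ends : E → V × V) (S : Finset E) :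
    S.card = 0 ∨ 0 < Fintype.card V := by
  rcases isEmpty_or_nonempty E with h | h
  · left
    have : S = ∅ := Finset.eq_empty_of_isEmpty S
    simp [this]
  · exact Or.inr (Fintype.card_pos_iff.mpr ⟨(ends h.some).1⟩)

end Stmt13Aux

/-- c(Γ̂_S) = Σ_{S' ⊆ S} c(Γ∖S'). -/
theorem stmt13 [Fintype V] [Fintype E] [DecidableEq V] [DecidableEq E] (ends : E → V × V) (S : Finset E) :
    complexity (subEnds ends S) (Finset.univ :
        Finset ({e : E // e ∉ S} ⊕ ({e : E // e ∈ S} × Bool))) =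
      ∑ S' ∈ S.powerset, complexity ends (Finset.univ \ S') := by
  classical
  rw [complexity_eq_card]
  rw [Finset.sum_congr rfl (fun S' _ => complexity_eq_card ends (Finset.univ \ S'))]
  rw [← Finset.card_sigma]
  have hcV := card_V_pos_or ends S
  have hVhat : Fintype.card (V ⊕ {e : E // e ∈ S}) = Fintype.card V + S.card := by
    rw [Fintype.card_sum, Fintype.card_coe]
  refine Finset.card_bij' (fun That _ => ⟨phiS S That, phiT S That⟩)
    (fun p _ => psiT S p.1 p.2) ?_ ?_ ?_ ?_
  · intro That hT
    simp only [Finset.mem_filter] at hT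
    obtain ⟨-, -, hconn, hcard⟩ := hT
    have hhalf := exists_half hconn
    have hdisj := phiT_disj (S := S) (That := That)
    have hcardT : That.card = (phiT S That).card + S.card := by
      have h := card_psiT (S := S) (S' := phiS S That) (T := phiT S That)
        phiS_subset hdisj
      rwa [psiT_phi hhalf] at h
    simp only [Finset.mem_sigma, Finset.mem_powerset, Finset.mem_filter]
    refine ⟨phiS_subset, ?_⟩
    refine ⟨Finset.mem_univ _, ?_, connF_phiT hconn, ?_⟩
    · intro e he
      rw [Finset.mem_sdiff]
      exact ⟨Finset.mem_univ _, hdisj e he⟩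
    · rw [hVhat] at hcard
      omega
  · rintro ⟨S', T⟩ hp
    simp only [Finset.mem_sigma, Finset.mem_powerset, Finset.mem_filter] at hp
    obtain ⟨hS', -, hsub, hconn, hcard⟩ := hp
    have hdisj : ∀ e ∈ T, e ∉ S' := fun e he hs =>
      (Finset.mem_sdiff.mp (hsub he)).2 hs
    simp only [Finset.mem_filter]
    refine ⟨Finset.mem_univ _, Finset.subset_univ _, connF_psiT hconn, ?_⟩
    rw [card_psiT hS' hdisj, hVhat]
    omega
  · intro That hT
    simp only [Finset.mem_filter] at hT
    exact psiT_phi (exists_half hT.2.2.1)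
  · rintro ⟨S', T⟩ hp
    simp only [Finset.mem_sigma, Finset.mem_powerset, Finset.mem_filter] at hp
    obtain ⟨hS', -, hsub, hconn, hcard⟩ := hp
    have hdisj : ∀ e ∈ T, e ∉ S' := fun e he hs =>
      (Finset.mem_sdiff.mp (hsub he)).2 hs
    simp only
    rw [phiS_psiT hS' hdisj, phiT_psiT (S := S) hdisj]
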